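/- The series ∑_{n≥1} n * g_n * (27/256)^n is summable; that is, the term-by-term derivative of the power series ∑_{n≥1} g_n x^n still converges at the point x = 27/256 on its circle of convergence. -/

import Mathlib

/-- `gseq n` is the number `g_n = 2·(4n+1)!/((n+1)!·(3n+2)!)` of rooted 3-connected
planar triangulations with `2n+2` faces (as a real number), with `g_0 = 0`. -/
noncomputable def gseq (n : ℕ) : ℝ :=
  if n = 0 then 0
  else 2 * (Nat.factorial (4 * n + 1)) / ((Nat.factorial (n + 1)) * (Nat.factorial (3 * n + 2)))

lemma gseq_pos (n : ℕ) (h : n ≠ 0) : 0 < gseq n := by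
  unfold gseq; rw [if_neg h]; positivity

lemma gseq_nonneg (n : ℕ) : 0 ≤ gseq n := by
  unfold gseq; split <;> positivity

lemma gseq_rec (n : ℕ) (h : n ≠ 0) :
    (((n:ℝ)+2)*(3*(n:ℝ)+3)*(3*(n:ℝ)+4)*(3*(n:ℝ)+5)) * gseq (n+1)
      = ((4*(n:ℝ)+2)*(4*(n:ℝ)+3)*(4*(n:ℝ)+4)*(4*(n:ℝ)+5)) * gseq n := by
  unfold gseq
  rw [if_neg h, if_neg (Nat.succ_ne_zero n)]
  have h1 : 4 * (n+1) + 1 = (4*n+1) + 1 + 1 + 1 + 1 := by ring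
  have h2 : 3 * (n+1) + 2 = (3*n+2) + 1 + 1 + 1 := by ring
  rw [h1, h2]
  rw [Nat.factorial_succ ((4*n+1)+1+1+1), Nat.factorial_succ ((4*n+1)+1+1),
    Nat.factorial_succ ((4*n+1)+1), Nat.factorial_succ (4*n+1),
    Nat.factorial_succ ((3*n+2)+1+1), Nat.factorial_succ ((3*n+2)+1),
    Nat.factorial_succ (3*n+2), Nat.factorial_succ (n+1)]
  have p1 : (0:ℝ) < (Nat.factorial (4*n+1) : ℝ) := by positivity
  have p2 : (0:ℝ) < (Nat.factorial (3*n+2) : ℝ) := by positivity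
  have p3 : (0:ℝ) < (Nat.factorial (n+1) : ℝ) := by positivity
  push_cast
  field_simp
  ring

set_option maxHeartbeats 1000000 in
lemma key_real (x : ℝ) (hx : 0 ≤ x) :
    531441 * ((4*(x+7)+2)*(4*(x+7)+3)*(4*(x+7)+4)*(4*(x+7)+5))^4 * ((x+7)+1)^9
      ≤ 4294967296 * (((x+7)+2)*(3*(x+7)+3)*(3*(x+7)+4)*(3*(x+7)+5))^4 * (x+7)^9 := by
  have hE : (0:ℝ) ≤
    994067332801179680549982091345920000 + 3974736033408190214210380212731904000*x^1 + 7173726677255065858411124281363660800*x^2 + 7944405595192368127681588085768847360*x^3 + 6131074529972091503006008061233987584*x^4 + 3533910471756565636133776171009572864*x^5 + 1587971332755431176182922097329176576*x^6 + 572390106403695269416843183449440256*x^7 + 168808949925066154778241586144739328*x^8 + 41306023353691833858454094887256064*x^9 + 8468279915487330231664682106617856*x^10 + 1464210272198661423845517417775104*x^11 + 214370226441059371814134663446528*x^12 + 26619819071217424917023512129536*x^13 + 2802232078856189281864991932416*x^14 + 249383615449115556916328300544*x^15 + 18664870710728667458086502400*x^16 + 1165237962342097748321304576*x^17 + 59953955366987822178238464*x^18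 + 2498742303601163337990144*x^19 + 82258706587630153236480*x^20 + 2058887659960720687104*x^21 + 36821133075356319744*x^22 + 419159751562100736*x^23 + 2282521714753536*x^24 := by positivity
  nlinarith [hE]

set_option maxHeartbeats 1000000 in
lemma step (n : ℕ) (hn : 7 ≤ n) :
    ((n+1:ℕ):ℝ) * gseq (n+1) * ((27:ℝ)/256)^(n+1) * (((n+1:ℕ):ℝ)) ^ ((5:ℝ)/4)
      ≤ (n:ℝ) * gseq n * ((27:ℝ)/256)^n * ((n:ℝ)) ^ ((5:ℝ)/4) := by
  have hn0 : n ≠ 0 := by omega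
  have hnR : (7:ℝ) ≤ (n:ℝ) := by exact_mod_cast hn
  have hg0 : 0 < gseq n := gseq_pos n hn0
  have hg1 : 0 < gseq (n+1) := gseq_pos (n+1) (Nat.succ_ne_zero n)
  push_cast
  -- reduce to 4th powers
  have hL : (0:ℝ) ≤ ((n:ℝ)+1) * gseq (n+1) * ((27:ℝ)/256)^(n+1) * (((n:ℝ)+1)) ^ ((5:ℝ)/4) := by
    positivity
  have hR : (0:ℝ) ≤ (n:ℝ) * gseq n * ((27:ℝ)/256)^n * ((n:ℝ)) ^ ((5:ℝ)/4) := by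
    positivity
  rw [← pow_le_pow_iff_left₀ hL hR (four_ne_zero)]
  have hrp : ∀ y : ℝ, 0 ≤ y → (y ^ ((5:ℝ)/4)) ^ (4:ℕ) = y ^ (5:ℕ) := by
    intro y hy
    have h : (y ^ ((5:ℝ)/4)) ^ (4:ℕ) = y ^ (((5:ℕ):ℝ)) := by
      rw [← Real.rpow_natCast (y ^ ((5:ℝ)/4)) 4, ← Real.rpow_mul hy]
      norm_num
    rw [h, Real.rpow_natCast]
  have e1 : (((n:ℝ)+1) ^ ((5:ℝ)/4)) ^ (4:ℕ) = ((n:ℝ)+1) ^ (5:ℕ) := hrp _ (by positivity)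
  have e2 : (((n:ℝ)) ^ ((5:ℝ)/4)) ^ (4:ℕ) = ((n:ℝ)) ^ (5:ℕ) := hrp _ (by positivity)
  have hrec := gseq_rec n hn0
  have key := key_real ((n:ℝ)-7) (by linarith)
  have h7 : (n:ℝ) - 7 + 7 = (n:ℝ) := by ring
  rw [h7] at key
  have hQ : (0:ℝ) < (((n:ℝ)+2)*(3*(n:ℝ)+3)*(3*(n:ℝ)+4)*(3*(n:ℝ)+5)) := by positivity
  have hrec4 : ((((n:ℝ)+2)*(3*(n:ℝ)+3)*(3*(n:ℝ)+4)*(3*(n:ℝ)+5)) * gseq (n+1))^4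
      = (((4*(n:ℝ)+2)*(4*(n:ℝ)+3)*(4*(n:ℝ)+4)*(4*(n:ℝ)+5)) * gseq n)^4 := by rw [hrec]
  have hQ4 : (0:ℝ) < (((n:ℝ)+2)*(3*(n:ℝ)+3)*(3*(n:ℝ)+4)*(3*(n:ℝ)+5))^4 := by positivity
  rw [← mul_le_mul_iff_of_pos_left hQ4]
  have hxpos : (0:ℝ) ≤ gseq n ^ 4 * (((27:ℝ)/256)^n)^4 := by positivity
  have hmul := mul_le_mul_of_nonneg_left key hxpos
  calc (((n:ℝ)+2)*(3*(n:ℝ)+3)*(3*(n:ℝ)+4)*(3*(n:ℝ)+5))^4 *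
        (((n:ℝ)+1) * gseq (n+1) * ((27:ℝ)/256)^(n+1) * (((n:ℝ)+1)) ^ ((5:ℝ)/4))^4
      = ((((n:ℝ)+2)*(3*(n:ℝ)+3)*(3*(n:ℝ)+4)*(3*(n:ℝ)+5)) * gseq (n+1))^4 *
          (((n:ℝ)+1)^4 * (((27:ℝ)/256)^n)^4 * ((27:ℝ)/256)^4 * ((((n:ℝ)+1)) ^ ((5:ℝ)/4))^4) := by
        ring
    _ = (((4*(n:ℝ)+2)*(4*(n:ℝ)+3)*(4*(n:ℝ)+4)*(4*(n:ℝ)+5)) * gseq n)^4 *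
          (((n:ℝ)+1)^4 * (((27:ℝ)/256)^n)^4 * ((27:ℝ)/256)^4 * (((n:ℝ)+1) ^ (5:ℕ))) := by
        rw [hrec4, e1]
    _ ≤ (((n:ℝ)+2)*(3*(n:ℝ)+3)*(3*(n:ℝ)+4)*(3*(n:ℝ)+5))^4 *
          ((n:ℝ)^4 * gseq n ^4 * (((27:ℝ)/256)^n)^4 * ((n:ℝ)) ^ (5:ℕ)) := by
        nlinarith [hmul]
    _ = (((n:ℝ)+2)*(3*(n:ℝ)+3)*(3*(n:ℝ)+4)*(3*(n:ℝ)+5))^4 *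
          ((n:ℝ) * gseq n * ((27:ℝ)/256)^n * (((n:ℝ)) ^ ((5:ℝ)/4)))^4 := by
        rw [← e2]; ring


/-- The term-by-term derivative series `∑ n·g_n·(27/256)ⁿ` still converges at the
point `x = 27/256` on the circle of convergence. -/
theorem stmt_3 :
    Summable (fun n : ℕ => (n : ℝ) * gseq n * (27 / 256 : ℝ) ^ n) := by
  set a : ℕ → ℝ := fun n => (n : ℝ) * gseq n * (27 / 256 : ℝ) ^ n with ha
  have hanon : ∀ n, 0 ≤ a n := fun n => by
    have := gseq_nonneg n; simp only [ha]; positivity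
  set C : ℝ := a 7 * ((7:ℕ):ℝ) ^ ((5:ℝ)/4) with hC
  have hdec : ∀ m, 7 ≤ m → a m * ((m:ℕ):ℝ) ^ ((5:ℝ)/4) ≤ C := by
    intro m hm
    induction m, hm using Nat.le_induction with
    | base => exact le_refl _
    | succ m hm ih => exact le_trans (step m hm) ih
  have hle : ∀ n : ℕ, a (n + 7) ≤ C * (1 / (((n+7:ℕ)):ℝ) ^ ((5:ℝ)/4)) := by
    intro n
    have ht : (0:ℝ) < (((n+7:ℕ)):ℝ) ^ ((5:ℝ)/4) := by
      have : (0:ℝ) < ((n+7:ℕ):ℝ) := by positivity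
      positivity
    rw [mul_one_div, le_div_iff₀ ht]
    exact hdec (n+7) (by omega)
  have hs : Summable (fun n : ℕ => C * (1 / (((n+7:ℕ)):ℝ) ^ ((5:ℝ)/4))) := by
    apply Summable.mul_left
    exact (summable_nat_add_iff 7).2 (Real.summable_one_div_nat_rpow.2 (by norm_num))
  rw [← summable_nat_add_iff 7]
  exact Summable.of_nonneg_of_le (fun n => hanon (n+7)) hle hs
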